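/- arXiv:2508.10961 — 5 statements merged into one kernel-verified Lean document; each statement's English description precedes it below -/
import Mathlib

section
/- Normal magic hexagons exist only for orders 1 and 3: if n ≥ 1 and there exists a magic hexagon x : H_n → ℤ of order n (with some magic sum M) whose entries are exactly the integers 1 through 3n²−3n+1, each used once, then n = 1 or n = 3. -/
/-- The order-`n` hexagonal board: triples `(a,b,c)` of integers with
`a + b + c = 0` and `|a|, |b|, |c| ≤ n - 1`. -/
noncomputable def hexBoard (n : ℕ) : Finset (ℤ × ℤ × ℤ) :=
  ((Finset.Icc (-(n:ℤ) + 1) ((n:ℤ) - 1)) ×ˢ (Finset.Icc (-(n:ℤ) + 1) ((n:ℤ) - 1)) ×ˢ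
      (Finset.Icc (-(n:ℤ) + 1) ((n:ℤ) - 1))).filter
    (fun p => p.1 + p.2.1 + p.2.2 = 0)

/-- The `k`-th coordinate of a cell. -/
def hexCoord : Fin 3 → ℤ × ℤ × ℤ → ℤ
  | 0, p => p.1
  | 1, p => p.2.1
  | 2, p => p.2.2

/-- The line of the order-`n` board consisting of the cells whose `k`-th
coordinate equals `v`. -/
noncomputable def hexLine (n : ℕ) (k : Fin 3) (v : ℤ) : Finset (ℤ × ℤ × ℤ) :=
  (hexBoard n).filter (fun p => hexCoord k p = v)

/-- `x` is a magic hexagon of order `n` with magic sum `M`: the sum of `x` over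
every line of the order-`n` board equals `M`. -/
def IsMagicHexagon (n : ℕ) (x : ℤ × ℤ × ℤ → ℤ) (M : ℤ) : Prop :=
  ∀ k : Fin 3, ∀ v : ℤ, |v| ≤ (n:ℤ) - 1 → ∑ p ∈ hexLine n k v, x p = M

lemma sum_Icc_one (N : ℤ) (hN : 0 ≤ N) :
    2 * ∑ i ∈ Finset.Icc (1:ℤ) N, i = N * (N + 1) := by
  obtain ⟨m, rfl⟩ := Int.eq_ofNat_of_zero_le hN
  induction m with
  | zero => simp
  | succ k ih =>
    have hc : ((k + 1 : ℕ) : ℤ) = (k : ℤ) + 1 := by push_cast; ring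
    have hins : Finset.Icc (1:ℤ) ((k:ℤ) + 1) = insert ((k:ℤ) + 1) (Finset.Icc (1:ℤ) (k:ℤ)) := by
      ext i
      simp only [Finset.mem_Icc, Finset.mem_insert]
      omega
    have hnot : (k:ℤ) + 1 ∉ Finset.Icc (1:ℤ) (k:ℤ) := by
      simp only [Finset.mem_Icc]; omega
    rw [hc, hins, Finset.sum_insert hnot]
    have := ih (by positivity)
    linarith

/-- Normal magic hexagons exist only for orders `1` and `3`. -/
theorem normal_magic_hexagon_only_orders_one_three (n : ℕ) (hn : 1 ≤ n)
    (x : ℤ × ℤ × ℤ → ℤ) (M : ℤ)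
    (hbij : Set.BijOn x ↑(hexBoard n) (Set.Icc (1 : ℤ) (3 * (n:ℤ)^2 - 3 * (n:ℤ) + 1)))
    (hmagic : IsMagicHexagon n x M) :
    n = 1 ∨ n = 3 := by
  set N : ℤ := 3 * (n:ℤ)^2 - 3 * (n:ℤ) + 1 with hNdef
  have hNpos : 0 ≤ N := by nlinarith [sq_nonneg ((n:ℤ) - 1)]
  -- total sum of entries
  have htot : ∑ p ∈ hexBoard n, x p = ∑ i ∈ Finset.Icc (1:ℤ) N, i := by
    apply Finset.sum_nbij (i := x)
    · intro a ha
      have := hbij.mapsTo (by exact_mod_cast ha)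
      simpa [Finset.mem_Icc, Set.mem_Icc] using this
    · intro a ha b hb hab
      exact hbij.injOn (by exact_mod_cast ha) (by exact_mod_cast hb) hab
    · intro b hb
      have hb' : b ∈ Set.Icc (1:ℤ) N := by simpa [Set.mem_Icc, Finset.mem_Icc] using hb
      obtain ⟨a, ha, rfl⟩ := hbij.surjOn hb'
      exact Set.mem_image_of_mem x ha
    · intro a _; rfl
  -- fiberwise decomposition by first coordinate
  have hfib : ∑ v ∈ Finset.Icc (-(n:ℤ) + 1) ((n:ℤ) - 1),
      ∑ p ∈ (hexBoard n).filter (fun p => p.1 = v), x p = ∑ p ∈ hexBoard n, x p := by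
    apply Finset.sum_fiberwise_of_maps_to
    intro p hp
    simp only [hexBoard, Finset.mem_filter, Finset.mem_product] at hp
    exact hp.1.1
  have hline : ∀ v ∈ Finset.Icc (-(n:ℤ) + 1) ((n:ℤ) - 1),
      ∑ p ∈ (hexBoard n).filter (fun p => p.1 = v), x p = M := by
    intro v hv
    rw [Finset.mem_Icc] at hv
    have := hmagic 0 v (by rw [abs_le]; omega)
    simp only [hexLine, hexCoord] at this
    convert this using 2
    ext p; exact Iff.rfl
  have hcard : ((Finset.Icc (-(n:ℤ) + 1) ((n:ℤ) - 1)).card : ℤ) = 2 * n - 1 := by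
    rw [Int.card_Icc]
    omega
  have hsum : (2 * (n:ℤ) - 1) * M = ∑ i ∈ Finset.Icc (1:ℤ) N, i := by
    rw [← htot, ← hfib, Finset.sum_congr rfl hline, Finset.sum_const, nsmul_eq_mul, hcard]
  have key : 2 * ((2 * (n:ℤ) - 1) * M) = N * (N + 1) := by
    rw [hsum]; exact sum_Icc_one N hNpos
  -- divisibility: (2n-1) ∣ 5
  have hdvd : (2 * (n:ℤ) - 1) ∣ 5 := by
    refine ⟨32 * M - (72 * (n:ℤ)^3 - 108 * (n:ℤ)^2 + 90 * (n:ℤ) - 27), ?_⟩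
    have h16 : 16 * (2 * ((2 * (n:ℤ) - 1) * M)) = 16 * (N * (N + 1)) := by rw [key]
    rw [hNdef] at h16
    nlinarith [h16]
  have hle : 2 * (n:ℤ) - 1 ≤ 5 := Int.le_of_dvd (by norm_num) hdvd
  have hn3 : n ≤ 3 := by exact_mod_cast by omega
  interval_cases n
  · left; rfl
  · exfalso
    norm_num at hdvd
  · right; rfl
end

section
/- For a positive integer n, the integer 2(2n−1) divides (3n²−3n+1)(3n²−3n+2) if and only if n = 1 or n = 3. (Equivalently, the required magic sum N(N+1)/(2(2n−1)) of a normal order-n magic hexagon, where N = 3n²−3n+1, is an integer only for n = 1 and n = 3.) -/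
/-- For a positive integer `n`, `2(2n−1)` divides `(3n²−3n+1)(3n²−3n+2)` if and
only if `n = 1` or `n = 3`. -/
theorem magic_sum_integrality (n : ℕ) (hn : 0 < n) :
    (2 * (2 * (n:ℤ) - 1)) ∣ (3 * (n:ℤ)^2 - 3 * (n:ℤ) + 1) * (3 * (n:ℤ)^2 - 3 * (n:ℤ) + 2)
      ↔ n = 1 ∨ n = 3 := by
  constructor
  · intro h
    have hd : (2 * (n:ℤ) - 1) ∣ (3 * (n:ℤ)^2 - 3 * (n:ℤ) + 1) * (3 * (n:ℤ)^2 - 3 * (n:ℤ) + 2) :=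
      dvd_trans ⟨2, by ring⟩ h
    have h5 : (2 * (n:ℤ) - 1) ∣ 5 := by
      have key : (5:ℤ) = 16 * ((3 * (n:ℤ)^2 - 3 * (n:ℤ) + 1) * (3 * (n:ℤ)^2 - 3 * (n:ℤ) + 2))
          - (2 * (n:ℤ) - 1) * (9 * (2 * (n:ℤ) - 1)^3 + 18 * (2 * (n:ℤ) - 1)) := by ring
      rw [key]
      exact dvd_sub (hd.mul_left 16) (Dvd.intro _ rfl)
    have hle : (2 * (n:ℤ) - 1) ≤ 5 := Int.le_of_dvd (by norm_num) h5
    have hn3 : n ≤ 3 := by omega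
    interval_cases n
    · left; rfl
    · exfalso; norm_num at h
    · right; rfl
  · rintro (rfl | rfl) <;> norm_num
end

section
/- There exists a magic hexagon of order 3 with magic sum 0 whose 19 integer entries are pairwise distinct. -/
def magicVal : ℤ × ℤ × ℤ → ℤ
  | (-2, 0, 2) => -19
  | (-2, 1, 1) => 6
  | (-2, 2, 0) => 13
  | (-1, -1, 2) => 8
  | (-1, 0, 1) => 12
  | (-1, 1, 0) => -11
  | (-1, 2, -1) => -9
  | (0, -2, 2) => 11
  | (0, -1, 1) => -10
  | (0, 0, 0) => -1
  | (0, 1, -1) => 4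
  | (0, 2, -2) => -4
  | (1, -2, 1) => -8
  | (1, -1, 0) => 2
  | (1, 0, -1) => 5
  | (1, 1, -2) => 1
  | (2, -2, 0) => -3
  | (2, -1, -1) => 0
  | (2, 0, -2) => 3
  | _ => 0

/-- There exists a magic hexagon of order `3` with magic sum `0` whose 19
entries are pairwise distinct. -/
theorem magic_hexagon_order_three_sum_zero :
    ∃ x : ℤ × ℤ × ℤ → ℤ,
      Set.InjOn x ↑(hexBoard 3) ∧ IsMagicHexagon 3 x 0 := by
  refine ⟨magicVal, ?_, ?_⟩
  · have h : ∀ p ∈ hexBoard 3, ∀ q ∈ hexBoard 3, magicVal p = magicVal q → p = q := by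
      decide
    exact fun p hp q hq => h p hp q hq
  · intro k v hv
    have hv' : v = -2 ∨ v = -1 ∨ v = 0 ∨ v = 1 ∨ v = 2 := by
      rw [abs_le] at hv; omega
    fin_cases k <;> rcases hv' with rfl | rfl | rfl | rfl | rfl <;> decide
end

section
/- There exists a magic hexagon of order 5 with magic sum 244 whose entries are exactly the integers 6 through 66, each used once; that is, there is a bijection x from H_5 (which has 61 cells) onto {6, 7, …, 66} such that the sum of x over each of the 27 lines of H_5 equals 244. -/

def hexData : List ((ℤ × ℤ × ℤ) × ℤ) := [
  ((-4, 0, 4), 56),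
  ((-4, 1, 3), 43),
  ((-4, 2, 2), 28),
  ((-4, 3, 1), 54),
  ((-4, 4, 0), 63),
  ((-3, -1, 4), 61),
  ((-3, 0, 3), 42),
  ((-3, 1, 2), 38),
  ((-3, 2, 1), 19),
  ((-3, 3, 0), 37),
  ((-3, 4, -1), 47),
  ((-2, -2, 4), 57),
  ((-2, -1, 3), 24),
  ((-2, 0, 2), 17),
  ((-2, 1, 1), 30),
  ((-2, 2, 0), 21),
  ((-2, 3, -1), 29),
  ((-2, 4, -2), 66),
  ((-1, -3, 4), 45),
  ((-1, -2, 3), 27),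
  ((-1, -1, 2), 32),
  ((-1, 0, 1), 7),
  ((-1, 1, 0), 8),
  ((-1, 2, -1), 35),
  ((-1, 3, -2), 40),
  ((-1, 4, -3), 50),
  ((0, -4, 4), 25),
  ((0, -3, 3), 60),
  ((0, -2, 2), 58),
  ((0, -1, 1), 13),
  ((0, 0, 0), 6),
  ((0, 1, -1), 11),
  ((0, 2, -2), 33),
  ((0, 3, -3), 20),
  ((0, 4, -4), 18),
  ((1, -4, 3), 48),
  ((1, -3, 2), 9),
  ((1, -2, 1), 10),
  ((1, -1, 0), 22),
  ((1, 0, -1), 16),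
  ((1, 1, -2), 26),
  ((1, 2, -3), 49),
  ((1, 3, -4), 64),
  ((2, -4, 2), 62),
  ((2, -3, 1), 46),
  ((2, -2, 0), 12),
  ((2, -1, -1), 14),
  ((2, 0, -2), 15),
  ((2, 1, -3), 36),
  ((2, 2, -4), 59),
  ((3, -4, 1), 65),
  ((3, -3, 0), 31),
  ((3, -2, -1), 39),
  ((3, -1, -2), 23),
  ((3, 0, -3), 34),
  ((3, 1, -4), 52),
  ((4, -4, 0), 44),
  ((4, -3, -1), 53),
  ((4, -2, -2), 41),
  ((4, -1, -3), 55),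
  ((4, 0, -4), 51)]

def hexFun : ℤ × ℤ × ℤ → ℤ := fun p => ((hexData.lookup p).getD 0)

lemma hexFun_image : (hexBoard 5).image hexFun = Finset.Icc 6 66 := by decide

lemma hexCards : ((hexBoard 5).image hexFun).card = (hexBoard 5).card := by decide

/-- There is a magic hexagon of order `5` with magic sum `244` whose entries
are exactly the integers `6` through `66`. -/
theorem magic_hexagon_order_five :
    ∃ x : ℤ × ℤ × ℤ → ℤ,
      Set.BijOn x ↑(hexBoard 5) (Set.Icc (6 : ℤ) 66) ∧ IsMagicHexagon 5 x 244 := by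
  refine ⟨hexFun, ⟨?_, Finset.injOn_of_card_image_eq hexCards, ?_⟩, ?_⟩
  · intro p hp
    have h := Finset.mem_image_of_mem hexFun hp
    rw [hexFun_image, Finset.mem_Icc] at h
    exact h
  · intro y hy
    rw [Set.mem_Icc] at hy
    have : y ∈ (hexBoard 5).image hexFun := by rw [hexFun_image, Finset.mem_Icc]; exact hy
    rw [Finset.mem_image] at this
    obtain ⟨p, hp, hpy⟩ := this
    exact ⟨p, hp, hpy⟩
  · intro k v hv
    have h4 : |v| ≤ 4 := by norm_num at hv; exact hv
    rw [abs_le] at h4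
    obtain ⟨h1, h2⟩ := h4
    interval_cases v <;> fin_cases k <;> decide
end

section
/- There exists a magic hexagon of order 6 with magic sum 546 whose entries are exactly the integers 21 through 111, each used once; that is, there is a bijection x from H_6 (which has 91 cells) onto {21, 22, …, 111} such that the sum of x over each of the 33 lines of H_6 equals 546. -/
/-- Explicit entries of an order-6 magic hexagon (found by computer search). -/
def hexX (p : ℤ × ℤ × ℤ) : ℤ :=
  let a := p.1; let b := p.2.1;
  if a = -5 then (if b = 0 then 65 else if b = 1 then 101 else if b = 2 then 104 else if b = 3 then 109 else if b = 4 then 89 else if b = 5 then 78 else 0) else (if a = -4 then (if b = -1 then 98 else if b = 0 then 46 else if b = 1 then 93 else if b = 2 then 73 else if b = 3 then 81 else if b = 4 then 72 else if b = 5 then 83 else 0) else (if a = -3 then (if b = -2 then 107 else if b = -1 then 74 else if b = 0 then 47 else if b = 1 then 37 else if b = 2 then 53 else if b = 3 then 44 else if b = 4 then 84 else if b = 5 then 100 else 0) else (if a = -2 then (if b = -3 then 88 else if b = -2 then 91 else if b = -1 then 36 else if b = 0 then 32 else if b = 1 then 35 else if b = 2 then 39 else if b = 3 then 45 else if b = 4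 then 70 else if b = 5 then 110 else 0) else (if a = -1 then (if b = -4 then 106 else if b = -3 then 79 else if b = -2 then 43 else if b = -1 then 29 else if b = 0 then 22 else if b = 1 then 24 else if b = 2 then 23 else if b = 3 then 54 else if b = 4 then 67 else if b = 5 then 99 else 0) else (if a = 0 then (if b = -5 then 82 else if b = -4 then 60 else if b = -3 then 58 else if b = -2 then 31 else if b = -1 then 21 else if b = 0 then 34 else if b = 1 then 30 else if b = 2 then 50 else if b = 3 then 48 else if b = 4 then 56 else if b = 5 then 76 else 0) else (if a = 1 then (if b = -5 then 95 else if b = -4 then 68 else if b = -3 then 42 else if b = -2 then 33 else if b = -1 then 25 else if b = 0 then 27 else if b = 1 then 26 else if b = 2 then 51 else if b = 3 then 71 else if b = 4 then 108 else 0) else (if a = 2 then (if b = -5 then 97 else if b = -4 then 90 else if b = -3 then 41 else if b = -2 then 38 else if b = -1 then 28 else if b = 0 then 40 else if b = 1 then 57 else if b = 2 then 61 else if b = 3 then 94 else 0) else (if a = 3 then (if b = -5 then 103 else if b = -4 then 66 else if b = -3 then 59 else if b = -2 then 62 else if b = -1 then 49 else if b = 0 then 52 else if b = 1 then 63 else if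 b = 2 then 92 else 0) else (if a = 4 then (if b = -5 then 105 else if b = -4 then 69 else if b = -3 then 77 else if b = -2 then 55 else if b = -1 then 75 else if b = 0 then 85 else if b = 1 then 80 else 0) else (if a = 5 then (if b = -5 then 64 else if b = -4 then 87 else if b = -3 then 102 else if b = -2 then 86 else if b = -1 then 111 else if b = 0 then 96 else 0) else (0)))))))))))

set_option maxRecDepth 40000 in
set_option maxHeartbeats 2000000 in
/-- There is a magic hexagon of order `6` with magic sum `546` whose entries
are exactly the integers `21` through `111`. -/
theorem magic_hexagon_order_six :
    ∃ x : ℤ × ℤ × ℤ → ℤ,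
      Set.BijOn x ↑(hexBoard 6) (Set.Icc (21 : ℤ) 111) ∧ IsMagicHexagon 6 x 546 := by
  refine ⟨hexX, ?_, ?_⟩
  · have himg : (hexBoard 6).image hexX = Finset.Icc (21 : ℤ) 111 := by decide
    have hcard : ((hexBoard 6).image hexX).card = (hexBoard 6).card := by decide
    refine ⟨fun p hp => ?_, Finset.injOn_of_card_image_eq hcard, fun y hy => ?_⟩
    · have : hexX p ∈ (hexBoard 6).image hexX := Finset.mem_image_of_mem _ hp
      rw [himg] at this
      simpa using this
    · have : y ∈ (hexBoard 6).image hexX := by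
        rw [himg]; simpa using hy
      obtain ⟨p, hp, hpy⟩ := Finset.mem_image.mp this
      exact ⟨p, hp, hpy⟩
  · intro k v hv
    obtain ⟨h1, h2⟩ := abs_le.mp hv
    norm_num at h1 h2
    interval_cases v <;> fin_cases k <;> decide
end
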